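/- If a matrix T of size N×N satisfies that T - I has rank r, then any Krylov method with the Galerkin property applied to T converges in at most r+1 iterations; formally, the minimal polynomial of T has degree at most r+1. -/
import Mathlib

open Polynomial

lemma aeval_restrict_coe {K V : Type*} [Field K] [AddCommGroup V] [Module K V]
    (f : Module.End K V) {W : Submodule K V} (h : ∀ x ∈ W, f x ∈ W) (p : K[X]) (w : W) :
    ((Polynomial.aeval (f.restrict h) p) w : V) = Polynomial.aeval f p (w : V) := by
  induction p using Polynomial.induction_on' with
  | add p q hp hq => simp [hp, hq]
  | monomial n a =>
    rw [Polynomial.aeval_monomial, Polynomial.aeval_monomial, Module.End.pow_restrict n h]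
    simp [Module.algebraMap_end_apply, Module.End.mul_apply, LinearMap.restrict_apply]

theorem stmt_11 {K : Type*} [Field K] {N : ℕ}
    (T : Matrix (Fin N) (Fin N) K) (r : ℕ) (hr : (T - 1).rank = r) :
    (minpoly K T).natDegree ≤ r + 1 := by
  classical
  set f : Module.End K (Fin N → K) := Matrix.toLinAlgEquiv' T with hf
  have hmp : minpoly K f = minpoly K T := minpoly.algEquiv_eq Matrix.toLinAlgEquiv' T
  have hsub : f - 1 = (T - 1).mulVecLin := by
    ext v i
    simp [hf, Matrix.toLinAlgEquiv'_apply, Matrix.sub_mulVec, Matrix.mulVecLin_apply,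
      Matrix.one_mulVec, Matrix.one_apply, Pi.single_apply, eq_comm]
  set W : Submodule K (Fin N → K) := LinearMap.range (f - 1) with hW
  have hWr : Module.finrank K W = r := by
    rw [hW, hsub, ← Matrix.rank, hr]
  have hinv : ∀ x ∈ W, f x ∈ W := by
    intro x hx
    have h1 : (f - 1) x ∈ W := ⟨x, rfl⟩
    have : f x = (f - 1) x + x := by simp
    rw [this]
    exact W.add_mem h1 hx
  set f' : Module.End K W := f.restrict hinv with hf'
  have hint : IsIntegral K f' := Algebra.IsIntegral.isIntegral f'
  set q : K[X] := minpoly K f' with hq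
  have hqmonic : q.Monic := minpoly.monic hint
  have hqdeg : q.natDegree ≤ r := by
    have hdvd : q ∣ f'.charpoly := LinearMap.minpoly_dvd_charpoly f'
    have := Polynomial.natDegree_le_of_dvd hdvd f'.charpoly_monic.ne_zero
    rwa [f'.charpoly_natDegree, hWr] at this
  set p : K[X] := q * (X - C 1) with hp
  have haeval : Polynomial.aeval f p = 0 := by
    have hX : Polynomial.aeval f ((X - C 1 : K[X])) = f - 1 := by
      simp [Polynomial.aeval_X, Polynomial.aeval_C, Algebra.algebraMap_eq_smul_one]
    refine LinearMap.ext fun v => ?_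
    have hmem : (f - 1) v ∈ W := ⟨v, rfl⟩
    have h0 : Polynomial.aeval f' q = 0 := by rw [hq]; exact minpoly.aeval K f'
    have := aeval_restrict_coe f hinv q ⟨(f - 1) v, hmem⟩
    rw [← hf', h0] at this
    simp only [LinearMap.zero_apply, ZeroMemClass.coe_zero] at this
    calc (Polynomial.aeval f p) v
        = (Polynomial.aeval f q) ((Polynomial.aeval f ((X - C 1 : K[X]))) v) := by
          rw [hp, map_mul]; rfl
      _ = (Polynomial.aeval f q) ((f - 1) v) := by rw [hX]
      _ = 0 := this.symm
  have hpne : p ≠ 0 := (hqmonic.mul (monic_X_sub_C 1)).ne_zero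
  have hdvd : minpoly K f ∣ p := minpoly.dvd K f haeval
  have : (minpoly K f).natDegree ≤ p.natDegree := Polynomial.natDegree_le_of_dvd hdvd hpne
  rw [hmp] at this
  refine this.trans ?_
  rw [hp, Polynomial.natDegree_mul hqmonic.ne_zero (monic_X_sub_C (1:K)).ne_zero,
    Polynomial.natDegree_X_sub_C]
  omega
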